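/- Let s > 1/2 and σ ≥ 0 be real numbers. Then there exists a constant C > 0, depending only on s, such that for all measurable functions g, h : ℝ → ℂ one has ∫_ℝ e^{2σ|ξ|}(1+ξ²)^s |∫_ℝ g(ξ−η)h(η) dη|² dξ ≤ C² · (∫_ℝ e^{2σ|ξ|}(1+ξ²)^s |g(ξ)|² dξ) · (∫_ℝ e^{2σ|ξ|}(1+ξ²)^s |h(ξ)|² dξ), provided both factors on the right-hand side are finite (all integrals are Lebesgue integrals with values in [0,∞], the inner convolution integral being interpreted as 0 when the integrand is not integrable). -/

import Mathlib

open MeasureTheory Real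
open scoped ENNReal NNReal

-- square root cancel in ENNReal
private lemma hsq (x : ℝ≥0∞) : (x ^ (1/2 : ℝ)) ^ (2:ℕ) = x := by
  rw [← ENNReal.rpow_natCast (x ^ (1/2:ℝ)) 2, ← ENNReal.rpow_mul]
  norm_num

private lemma lintegral_cs (u v : ℝ → ℝ≥0∞) (hu : Measurable u) (hv : Measurable v) :
    (∫⁻ x, u x * v x) ^ 2 ≤ (∫⁻ x, (u x) ^ 2) * (∫⁻ x, (v x) ^ 2) := by
  have hpq : Real.HolderConjugate 2 2 := Real.HolderConjugate.two_two
  have h := ENNReal.lintegral_mul_le_Lp_mul_Lq (volume : Measure ℝ) hpq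
    hu.aemeasurable hv.aemeasurable
  simp only [Pi.mul_apply] at h
  calc (∫⁻ x, u x * v x) ^ 2
      ≤ ((∫⁻ x, u x ^ (2:ℝ)) ^ (1/2:ℝ) * (∫⁻ x, v x ^ (2:ℝ)) ^ (1/2:ℝ)) ^ 2 := by
        exact pow_le_pow_left' h 2
    _ = (∫⁻ x, (u x) ^ 2) * (∫⁻ x, (v x) ^ 2) := by
        rw [mul_pow, hsq, hsq]
        simp [ENNReal.rpow_natCast]

private lemma lintegral_reflect (u : ℝ → ℝ≥0∞) (hu : Measurable u) (ξ : ℝ) :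
    ∫⁻ η : ℝ, u (ξ - η) = ∫⁻ η : ℝ, u η := by
  have h1 := (Measure.measurePreserving_neg (volume : Measure ℝ)).lintegral_comp
    (f := fun t => u (ξ + t)) (hu.comp (measurable_const.add measurable_id))
  calc ∫⁻ η : ℝ, u (ξ - η) = ∫⁻ t : ℝ, u (ξ + t) := by
        simpa [sub_eq_add_neg] using h1
    _ = ∫⁻ η : ℝ, u η := lintegral_add_left_eq_self u ξ

private lemma young (u v : ℝ → ℝ≥0∞) (hu : Measurable u) (hv : Measurable v) :
    ∫⁻ ξ : ℝ, (∫⁻ η : ℝ, u (ξ - η) * v η) ^ 2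
      ≤ (∫⁻ x, (u x) ^ 2) * (∫⁻ x, v x) ^ 2 := by
  have step1 : ∀ ξ : ℝ, (∫⁻ η : ℝ, u (ξ - η) * v η) ^ 2
      ≤ (∫⁻ η : ℝ, v η * (u (ξ - η)) ^ 2) * (∫⁻ η : ℝ, v η) := by
    intro ξ
    have h := lintegral_cs (fun η => u (ξ - η) * (v η) ^ (1/2:ℝ)) (fun η => (v η) ^ (1/2:ℝ))
      ((hu.comp (measurable_const.sub measurable_id)).mul (hv.pow_const _))
      (hv.pow_const _)
    calc (∫⁻ η : ℝ, u (ξ - η) * v η) ^ 2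
        = (∫⁻ η : ℝ, (u (ξ - η) * (v η) ^ (1/2:ℝ)) * (v η) ^ (1/2:ℝ)) ^ 2 := by
          congr 1; apply lintegral_congr; intro η
          rw [mul_assoc, ← pow_two, hsq]
      _ ≤ (∫⁻ η : ℝ, (u (ξ - η) * (v η) ^ (1/2:ℝ)) ^ 2) * (∫⁻ η : ℝ, ((v η) ^ (1/2:ℝ)) ^ 2) := h
      _ = (∫⁻ η : ℝ, v η * (u (ξ - η)) ^ 2) * (∫⁻ η : ℝ, v η) := by
          congr 1
          · apply lintegral_congr; intro η; rw [mul_pow, hsq]; ring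
          · apply lintegral_congr; intro η; rw [hsq]
  have hmeas : Measurable fun ξ : ℝ => ∫⁻ η : ℝ, v η * (u (ξ - η)) ^ 2 := by
    apply Measurable.lintegral_prod_right (f := fun (ξ η : ℝ) => v η * (u (ξ - η)) ^ 2)
    exact (hv.comp measurable_snd).mul
      ((hu.comp (measurable_fst.sub measurable_snd)).pow_const 2)
  calc ∫⁻ ξ : ℝ, (∫⁻ η : ℝ, u (ξ - η) * v η) ^ 2
      ≤ ∫⁻ ξ : ℝ, (∫⁻ η : ℝ, v η * (u (ξ - η)) ^ 2) * (∫⁻ η : ℝ, v η) :=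
        lintegral_mono step1
    _ = (∫⁻ ξ : ℝ, ∫⁻ η : ℝ, v η * (u (ξ - η)) ^ 2) * (∫⁻ η : ℝ, v η) :=
        lintegral_mul_const _ hmeas
    _ = (∫⁻ η : ℝ, ∫⁻ ξ : ℝ, v η * (u (ξ - η)) ^ 2) * (∫⁻ η : ℝ, v η) := by
        rw [lintegral_lintegral_swap]
        exact ((hv.comp measurable_snd).mul
          ((hu.comp (measurable_fst.sub measurable_snd)).pow_const 2)).aemeasurable
    _ = (∫⁻ η : ℝ, v η * ∫⁻ ξ : ℝ, (u (ξ - η)) ^ 2) * (∫⁻ η : ℝ, v η) := by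
        congr 1; apply lintegral_congr; intro η
        exact lintegral_const_mul _ ((hu.comp (measurable_id.sub measurable_const)).pow_const 2)
    _ = (∫⁻ η : ℝ, v η * ∫⁻ x : ℝ, (u x) ^ 2) * (∫⁻ η : ℝ, v η) := by
        congr 1; apply lintegral_congr; intro η
        rw [lintegral_sub_right_eq_self (fun x => (u x) ^ 2) η]
    _ = (∫⁻ x, (u x) ^ 2) * (∫⁻ x, v x) ^ 2 := by
        rw [lintegral_mul_const _ hv]; ring

private lemma weight_ineq {s σ : ℝ} (hs0 : 0 ≤ s) (hσ : 0 ≤ σ) (ξ η : ℝ) :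
    Real.exp (σ * |ξ|) * (1 + ξ ^ 2) ^ (s/2) ≤
      (2:ℝ) ^ s * ((Real.exp (σ * |ξ - η|) * (1 + (ξ - η) ^ 2) ^ (s/2)) * Real.exp (σ * |η|)
        + Real.exp (σ * |ξ - η|) * (Real.exp (σ * |η|) * (1 + η ^ 2) ^ (s/2))) := by
  have habs : |ξ| ≤ |ξ - η| + |η| := by
    simpa using abs_add_le (ξ - η) η
  have hexp : Real.exp (σ * |ξ|) ≤ Real.exp (σ * |ξ - η|) * Real.exp (σ * |η|) := by
    rw [← Real.exp_add]
    apply Real.exp_le_exp.2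
    nlinarith
  have h4 : (4:ℝ) ^ (s/2) = 2 ^ s := by
    have h2 : (4:ℝ) = (2:ℝ) ^ (2:ℝ) := by
      rw [show (2:ℝ) = ((2:ℕ):ℝ) from by norm_num, Real.rpow_natCast]; norm_num
    rw [h2, ← Real.rpow_mul (by norm_num)]; congr 1; ring
  set a := 1 + (ξ - η) ^ 2 with ha
  set b := 1 + η ^ 2 with hb
  have ha0 : (0:ℝ) < a := by positivity
  have hb0 : (0:ℝ) < b := by positivity
  have h1 : 1 + ξ ^ 2 ≤ 2*a + 2*b := by
    rw [ha, hb]; nlinarith [sq_nonneg (ξ - 2*η)]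
  have hpoly : (1 + ξ ^ 2) ^ (s/2) ≤ (2:ℝ) ^ s * (a ^ (s/2) + b ^ (s/2)) := by
    rcases le_total a b with hab | hab
    · calc (1 + ξ ^ 2) ^ (s/2) ≤ (4*b) ^ (s/2) := by
            apply Real.rpow_le_rpow (by positivity) (by nlinarith) (by positivity)
        _ = (2:ℝ) ^ s * b ^ (s/2) := by
            rw [Real.mul_rpow (by norm_num) hb0.le, h4]
        _ ≤ (2:ℝ) ^ s * (a ^ (s/2) + b ^ (s/2)) := by
            apply mul_le_mul_of_nonneg_left _ (by positivity)
            exact le_add_of_nonneg_left (by positivity)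
    · calc (1 + ξ ^ 2) ^ (s/2) ≤ (4*a) ^ (s/2) := by
            apply Real.rpow_le_rpow (by positivity) (by nlinarith) (by positivity)
        _ = (2:ℝ) ^ s * a ^ (s/2) := by
            rw [Real.mul_rpow (by norm_num) ha0.le, h4]
        _ ≤ (2:ℝ) ^ s * (a ^ (s/2) + b ^ (s/2)) := by
            apply mul_le_mul_of_nonneg_left _ (by positivity)
            exact le_add_of_nonneg_right (by positivity)
  calc Real.exp (σ * |ξ|) * (1 + ξ ^ 2) ^ (s/2)
      ≤ (Real.exp (σ * |ξ - η|) * Real.exp (σ * |η|)) * ((2:ℝ) ^ s * (a ^ (s/2) + b ^ (s/2))) := by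
        apply mul_le_mul hexp hpoly (by positivity) (by positivity)
    _ = (2:ℝ) ^ s * ((Real.exp (σ * |ξ - η|) * a ^ (s/2)) * Real.exp (σ * |η|)
        + Real.exp (σ * |ξ - η|) * (Real.exp (σ * |η|) * b ^ (s/2))) := by ring

private lemma sq_add_le_four (x y : ℝ≥0∞) : (x + y) ^ 2 ≤ 4 * (x ^ 2 + y ^ 2) := by
  rcases le_total x y with hxy | hxy
  · calc (x + y) ^ 2 ≤ (y + y) ^ 2 := pow_le_pow_left' (add_le_add_left hxy y) 2
      _ = 4 * y ^ 2 := by ring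
      _ ≤ 4 * (x ^ 2 + y ^ 2) := by gcongr; exact self_le_add_left _ _
  · calc (x + y) ^ 2 ≤ (x + x) ^ 2 := pow_le_pow_left' (add_le_add_right hxy x) 2
      _ = 4 * x ^ 2 := by ring
      _ ≤ 4 * (x ^ 2 + y ^ 2) := by gcongr; exact self_le_add_right _ _

/-- Fourier-side algebra property of the Gevrey spaces `G^{σ,s}(ℝ)` for `s > 1/2`:
there is `C > 0`, depending only on `s`, such that for every `σ ≥ 0` and all
measurable `g h : ℝ → ℂ` with finite Gevrey-type weighted integrals,
`N_{σ,s}(g ⋆ h) ≤ C² N_{σ,s}(g) N_{σ,s}(h)`. -/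
theorem gevrey_algebra (s : ℝ) (hs : 1 / 2 < s) :
    ∃ C : ℝ, 0 < C ∧ ∀ σ : ℝ, 0 ≤ σ → ∀ g h : ℝ → ℂ, Measurable g → Measurable h →
      (∫⁻ ξ : ℝ, ENNReal.ofReal
          (Real.exp (2 * σ * |ξ|) * (1 + ξ ^ 2) ^ s * ‖g ξ‖ ^ 2)) ≠ ⊤ →
      (∫⁻ ξ : ℝ, ENNReal.ofReal
          (Real.exp (2 * σ * |ξ|) * (1 + ξ ^ 2) ^ s * ‖h ξ‖ ^ 2)) ≠ ⊤ →
      (∫⁻ ξ : ℝ, ENNReal.ofReal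
          (Real.exp (2 * σ * |ξ|) * (1 + ξ ^ 2) ^ s *
            ‖∫ η : ℝ, g (ξ - η) * h η‖ ^ 2)) ≤
        ENNReal.ofReal (C ^ 2) *
          (∫⁻ ξ : ℝ, ENNReal.ofReal
            (Real.exp (2 * σ * |ξ|) * (1 + ξ ^ 2) ^ s * ‖g ξ‖ ^ 2)) *
          (∫⁻ ξ : ℝ, ENNReal.ofReal
            (Real.exp (2 * σ * |ξ|) * (1 + ξ ^ 2) ^ s * ‖h ξ‖ ^ 2)) := by
  have hs0 : (0:ℝ) ≤ s := by linarith
  -- finiteness of ∫ (1+x²)^(-s)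
  set Aen : ℝ≥0∞ := ∫⁻ x : ℝ, ENNReal.ofReal ((1 + x ^ 2) ^ (-s)) with hAen
  have hAtop : Aen ≠ ⊤ := by
    have hA : Integrable (fun x : ℝ => ((1:ℝ) + ‖x‖ ^ 2) ^ (-(2*s) / 2)) (volume : Measure ℝ) :=
      integrable_rpow_neg_one_add_norm_sq (by simp; linarith)
    have h1 := hA.2
    rw [HasFiniteIntegral] at h1
    have heq : Aen = ∫⁻ x : ℝ, ‖((1:ℝ) + ‖x‖ ^ 2) ^ (-(2*s)/2)‖ₑ := by
      apply lintegral_congr; intro x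
      have hex : -(2*s)/2 = -s := by ring
      rw [Real.enorm_eq_ofReal (by positivity), Real.norm_eq_abs, sq_abs, hex]
    rw [heq]; exact h1.ne
  refine ⟨(2:ℝ) ^ s * Real.sqrt (8 * (Aen.toReal + 1)), by positivity, ?_⟩
  intro σ hσ g h hg hh _ _
  set C : ℝ := (2:ℝ) ^ s * Real.sqrt (8 * (Aen.toReal + 1)) with hC
  -- weights
  set e : ℝ → ℝ≥0∞ := fun x => ENNReal.ofReal (Real.exp (σ * |x|)) with he
  set p : ℝ → ℝ≥0∞ := fun x => ENNReal.ofReal ((1 + x ^ 2) ^ (s/2)) with hp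
  set q : ℝ → ℝ≥0∞ := fun x => ENNReal.ofReal ((1 + x ^ 2) ^ (-(s/2))) with hq
  have hme : Measurable e := by fun_prop
  have hmp : Measurable p := by fun_prop
  have hmq : Measurable q := by fun_prop
  have heptop : ∀ x, e x * p x ≠ ⊤ :=
    fun x => ENNReal.mul_ne_top ENNReal.ofReal_ne_top ENNReal.ofReal_ne_top
  -- integrand conversion
  have hconv : ∀ (f : ℝ → ℂ) (ξ : ℝ),
      ENNReal.ofReal (Real.exp (2 * σ * |ξ|) * (1 + ξ ^ 2) ^ s * ‖f ξ‖ ^ 2)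
        = (e ξ * p ξ * (‖f ξ‖₊ : ℝ≥0∞)) ^ 2 := by
    intro f ξ
    have h1 : Real.exp (2 * σ * |ξ|) = Real.exp (σ * |ξ|) ^ 2 := by
      rw [pow_two, ← Real.exp_add]; ring_nf
    have h2 : (1 + ξ ^ 2) ^ s = ((1 + ξ ^ 2) ^ (s/2)) ^ (2:ℕ) := by
      rw [← Real.rpow_natCast ((1 + ξ ^ 2) ^ (s/2)) 2, ← Real.rpow_mul (by positivity)]
      norm_num
    rw [h1, h2, ENNReal.ofReal_mul (by positivity), ENNReal.ofReal_mul (by positivity),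
      ENNReal.ofReal_pow (by positivity), ENNReal.ofReal_pow (by positivity),
      ENNReal.ofReal_pow (norm_nonneg _), ofReal_norm_eq_enorm, enorm_eq_nnnorm]
    rw [he, hp]; ring
  set G : ℝ → ℝ≥0∞ := fun x => e x * p x * (‖g x‖₊ : ℝ≥0∞) with hGdef
  set H : ℝ → ℝ≥0∞ := fun x => e x * p x * (‖h x‖₊ : ℝ≥0∞) with hHdef
  set Eg : ℝ → ℝ≥0∞ := fun x => e x * (‖g x‖₊ : ℝ≥0∞) with hEgdef
  set Eh : ℝ → ℝ≥0∞ := fun x => e x * (‖h x‖₊ : ℝ≥0∞) with hEhdef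
  have hmG : Measurable G := (hme.mul hmp).mul hg.nnnorm.coe_nnreal_ennreal
  have hmH : Measurable H := (hme.mul hmp).mul hh.nnnorm.coe_nnreal_ennreal
  have hmEg : Measurable Eg := hme.mul hg.nnnorm.coe_nnreal_ennreal
  have hmEh : Measurable Eh := hme.mul hh.nnnorm.coe_nnreal_ennreal
  set Ig : ℝ≥0∞ := ∫⁻ x : ℝ, (G x) ^ 2 with hIg
  set Ih : ℝ≥0∞ := ∫⁻ x : ℝ, (H x) ^ 2 with hIh
  -- p * q = 1
  have hpq1 : ∀ x : ℝ, p x * q x = 1 := by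
    intro x
    rw [hp, hq, ← ENNReal.ofReal_mul (by positivity), ← Real.rpow_add (by positivity)]
    norm_num
  -- q² integral
  have hq2 : (∫⁻ x : ℝ, (q x) ^ 2) = Aen := by
    apply lintegral_congr; intro x
    rw [hq, ← ENNReal.ofReal_pow (by positivity),
      ← Real.rpow_natCast ((1 + x ^ 2) ^ (-(s/2))) 2, ← Real.rpow_mul (by positivity)]
    norm_num
  -- L¹ bounds on Eg, Eh
  have hEhL1 : (∫⁻ x : ℝ, Eh x) ^ 2 ≤ Ih * Aen := by
    have heq : ∀ x, Eh x = H x * q x := by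
      intro x
      calc Eh x = e x * (‖h x‖₊ : ℝ≥0∞) * (p x * q x) := by rw [hpq1, mul_one]
        _ = H x * q x := by rw [hHdef]; ring
    calc (∫⁻ x : ℝ, Eh x) ^ 2 = (∫⁻ x : ℝ, H x * q x) ^ 2 := by
          congr 1; exact lintegral_congr heq
      _ ≤ (∫⁻ x, (H x) ^ 2) * (∫⁻ x, (q x) ^ 2) := lintegral_cs H q hmH hmq
      _ = Ih * Aen := by rw [hq2]
  have hEgL1 : (∫⁻ x : ℝ, Eg x) ^ 2 ≤ Ig * Aen := by
    have heq : ∀ x, Eg x = G x * q x := by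
      intro x
      calc Eg x = e x * (‖g x‖₊ : ℝ≥0∞) * (p x * q x) := by rw [hpq1, mul_one]
        _ = G x * q x := by rw [hGdef]; ring
    calc (∫⁻ x : ℝ, Eg x) ^ 2 = (∫⁻ x : ℝ, G x * q x) ^ 2 := by
          congr 1; exact lintegral_congr heq
      _ ≤ (∫⁻ x, (G x) ^ 2) * (∫⁻ x, (q x) ^ 2) := lintegral_cs G q hmG hmq
      _ = Ig * Aen := by rw [hq2]
  -- pointwise key inequality
  have hkey : ∀ ξ η : ℝ, e ξ * p ξ * ((‖g (ξ - η)‖₊ : ℝ≥0∞) * (‖h η‖₊ : ℝ≥0∞))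
      ≤ ENNReal.ofReal ((2:ℝ) ^ s) * (G (ξ - η) * Eh η + Eg (ξ - η) * H η) := by
    intro ξ η
    have hw := weight_ineq hs0 hσ ξ η
    have hw' : e ξ * p ξ ≤ ENNReal.ofReal ((2:ℝ) ^ s) *
        ((e (ξ - η) * p (ξ - η)) * e η + e (ξ - η) * (e η * p η)) := by
      rw [he, hp]
      calc ENNReal.ofReal (Real.exp (σ * |ξ|)) * ENNReal.ofReal ((1 + ξ ^ 2) ^ (s/2))
          = ENNReal.ofReal (Real.exp (σ * |ξ|) * (1 + ξ ^ 2) ^ (s/2)) :=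
            (ENNReal.ofReal_mul (by positivity)).symm
        _ ≤ ENNReal.ofReal ((2:ℝ) ^ s *
              ((Real.exp (σ * |ξ - η|) * (1 + (ξ - η) ^ 2) ^ (s/2)) * Real.exp (σ * |η|)
              + Real.exp (σ * |ξ - η|) * (Real.exp (σ * |η|) * (1 + η ^ 2) ^ (s/2)))) :=
            ENNReal.ofReal_le_ofReal hw
        _ = _ := by
            rw [ENNReal.ofReal_mul (by positivity),
              ENNReal.ofReal_add (by positivity) (by positivity),
              ENNReal.ofReal_mul (by positivity), ENNReal.ofReal_mul (by positivity),
              ENNReal.ofReal_mul (by positivity), ENNReal.ofReal_mul (by positivity)]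
    calc e ξ * p ξ * ((‖g (ξ - η)‖₊ : ℝ≥0∞) * (‖h η‖₊ : ℝ≥0∞))
        ≤ (ENNReal.ofReal ((2:ℝ) ^ s) *
            ((e (ξ - η) * p (ξ - η)) * e η + e (ξ - η) * (e η * p η)))
            * ((‖g (ξ - η)‖₊ : ℝ≥0∞) * (‖h η‖₊ : ℝ≥0∞)) := mul_le_mul_left hw' _
      _ = ENNReal.ofReal ((2:ℝ) ^ s) * (G (ξ - η) * Eh η + Eg (ξ - η) * H η) := by
          rw [hGdef, hHdef, hEgdef, hEhdef]; ring
  -- convolution pieces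
  set a : ℝ → ℝ≥0∞ := fun ξ => ∫⁻ η : ℝ, G (ξ - η) * Eh η with hadef
  set b : ℝ → ℝ≥0∞ := fun ξ => ∫⁻ η : ℝ, Eg (ξ - η) * H η with hbdef
  have hma : Measurable a := by
    apply Measurable.lintegral_prod_right (f := fun (ξ η : ℝ) => G (ξ - η) * Eh η)
    exact (hmG.comp (measurable_fst.sub measurable_snd)).mul (hmEh.comp measurable_snd)
  have hmb : Measurable b := by
    apply Measurable.lintegral_prod_right (f := fun (ξ η : ℝ) => Eg (ξ - η) * H η)
    exact (hmEg.comp (measurable_fst.sub measurable_snd)).mul (hmH.comp measurable_snd)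
  -- pointwise step
  have hstep : ∀ ξ : ℝ, (e ξ * p ξ * (‖∫ η : ℝ, g (ξ - η) * h η‖₊ : ℝ≥0∞)) ^ 2
      ≤ ENNReal.ofReal ((2:ℝ) ^ s) ^ 2 * (a ξ + b ξ) ^ 2 := by
    intro ξ
    have hnormint : ((‖∫ η : ℝ, g (ξ - η) * h η‖₊ : ℝ≥0∞))
        ≤ ∫⁻ η : ℝ, (‖g (ξ - η)‖₊ : ℝ≥0∞) * (‖h η‖₊ : ℝ≥0∞) := by
      calc ((‖∫ η : ℝ, g (ξ - η) * h η‖₊ : ℝ≥0∞))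
          ≤ ∫⁻ η : ℝ, (‖g (ξ - η) * h η‖₊ : ℝ≥0∞) :=
            by simpa only [enorm_eq_nnnorm] using enorm_integral_le_lintegral_enorm _
        _ = _ := by simp [nnnorm_mul, ENNReal.coe_mul]
    have h1 : e ξ * p ξ * (‖∫ η : ℝ, g (ξ - η) * h η‖₊ : ℝ≥0∞)
        ≤ ENNReal.ofReal ((2:ℝ) ^ s) * (a ξ + b ξ) := by
      calc e ξ * p ξ * (‖∫ η : ℝ, g (ξ - η) * h η‖₊ : ℝ≥0∞)
          ≤ e ξ * p ξ * ∫⁻ η : ℝ, (‖g (ξ - η)‖₊ : ℝ≥0∞) * (‖h η‖₊ : ℝ≥0∞) :=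
            mul_le_mul_right hnormint _
        _ = ∫⁻ η : ℝ, e ξ * p ξ * ((‖g (ξ - η)‖₊ : ℝ≥0∞) * (‖h η‖₊ : ℝ≥0∞)) :=
            (lintegral_const_mul' _ _ (heptop ξ)).symm
        _ ≤ ∫⁻ η : ℝ, ENNReal.ofReal ((2:ℝ) ^ s) * (G (ξ - η) * Eh η + Eg (ξ - η) * H η) :=
            lintegral_mono (hkey ξ)
        _ = ENNReal.ofReal ((2:ℝ) ^ s) * (a ξ + b ξ) := by
            rw [lintegral_const_mul' _ _ ENNReal.ofReal_ne_top]
            congr 1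
            exact lintegral_add_left ((hmG.comp (measurable_const.sub measurable_id)).mul hmEh) _
    calc (e ξ * p ξ * (‖∫ η : ℝ, g (ξ - η) * h η‖₊ : ℝ≥0∞)) ^ 2
        ≤ (ENNReal.ofReal ((2:ℝ) ^ s) * (a ξ + b ξ)) ^ 2 := pow_le_pow_left' h1 2
      _ = ENNReal.ofReal ((2:ℝ) ^ s) ^ 2 * (a ξ + b ξ) ^ 2 := mul_pow _ _ 2
  -- Young's inequality applications
  have hya : (∫⁻ ξ : ℝ, (a ξ) ^ 2) ≤ Ig * (∫⁻ x : ℝ, Eh x) ^ 2 := young G Eh hmG hmEh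
  have hbswap : ∀ ξ : ℝ, b ξ = ∫⁻ η : ℝ, H (ξ - η) * Eg η := by
    intro ξ
    have hr := lintegral_reflect (fun η => Eg (ξ - η) * H η)
      ((hmEg.comp (measurable_const.sub measurable_id)).mul hmH) ξ
    calc b ξ = ∫⁻ η : ℝ, Eg (ξ - η) * H η := rfl
      _ = ∫⁻ η : ℝ, Eg (ξ - (ξ - η)) * H (ξ - η) := hr.symm
      _ = ∫⁻ η : ℝ, H (ξ - η) * Eg η := by
          apply lintegral_congr; intro η; rw [sub_sub_cancel, mul_comm]
  have hyb : (∫⁻ ξ : ℝ, (b ξ) ^ 2) ≤ Ih * (∫⁻ x : ℝ, Eg x) ^ 2 := by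
    calc (∫⁻ ξ : ℝ, (b ξ) ^ 2) = ∫⁻ ξ : ℝ, (∫⁻ η : ℝ, H (ξ - η) * Eg η) ^ 2 := by
          apply lintegral_congr; intro ξ; rw [hbswap]
      _ ≤ Ih * (∫⁻ x : ℝ, Eg x) ^ 2 := young H Eg hmH hmEg
  -- constant comparison
  have hconst : ENNReal.ofReal ((2:ℝ) ^ s) ^ 2 * (8 * Aen) ≤ ENNReal.ofReal (C ^ 2) := by
    have hC2 : C ^ 2 = ((2:ℝ) ^ s) ^ 2 * (8 * (Aen.toReal + 1)) := by
      rw [hC, mul_pow, Real.sq_sqrt (by positivity)]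
    rw [hC2, ENNReal.ofReal_mul (by positivity), ENNReal.ofReal_pow (by positivity)]
    gcongr
    calc (8:ℝ≥0∞) * Aen = ENNReal.ofReal 8 * ENNReal.ofReal Aen.toReal := by
          rw [ENNReal.ofReal_toReal hAtop]; norm_num
      _ ≤ ENNReal.ofReal (8 * (Aen.toReal + 1)) := by
          rw [ENNReal.ofReal_mul (by norm_num)]
          gcongr
          linarith
  -- final chain
  calc (∫⁻ ξ : ℝ, ENNReal.ofReal (Real.exp (2 * σ * |ξ|) * (1 + ξ ^ 2) ^ s *
          ‖∫ η : ℝ, g (ξ - η) * h η‖ ^ 2))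
      = ∫⁻ ξ : ℝ, (e ξ * p ξ * (‖∫ η : ℝ, g (ξ - η) * h η‖₊ : ℝ≥0∞)) ^ 2 :=
        lintegral_congr (hconv _)
    _ ≤ ∫⁻ ξ : ℝ, ENNReal.ofReal ((2:ℝ) ^ s) ^ 2 * (a ξ + b ξ) ^ 2 := lintegral_mono hstep
    _ = ENNReal.ofReal ((2:ℝ) ^ s) ^ 2 * ∫⁻ ξ : ℝ, (a ξ + b ξ) ^ 2 :=
        lintegral_const_mul' _ _ (by simp [ENNReal.ofReal_ne_top])
    _ ≤ ENNReal.ofReal ((2:ℝ) ^ s) ^ 2 * ∫⁻ ξ : ℝ, 4 * ((a ξ) ^ 2 + (b ξ) ^ 2) := by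
        gcongr with ξ
        exact sq_add_le_four _ _
    _ = ENNReal.ofReal ((2:ℝ) ^ s) ^ 2 * (4 * ((∫⁻ ξ : ℝ, (a ξ) ^ 2) + ∫⁻ ξ : ℝ, (b ξ) ^ 2)) := by
        rw [lintegral_const_mul' _ _ (by norm_num),
          lintegral_add_left (hma.pow_const 2)]
    _ ≤ ENNReal.ofReal ((2:ℝ) ^ s) ^ 2 * (4 * (Ig * (Ih * Aen) + Ih * (Ig * Aen))) := by
        gcongr
        · exact hya.trans (by gcongr)
        · exact hyb.trans (by gcongr)
    _ = (ENNReal.ofReal ((2:ℝ) ^ s) ^ 2 * (8 * Aen)) * Ig * Ih := by ring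
    _ ≤ ENNReal.ofReal (C ^ 2) * Ig * Ih := by gcongr
    _ = ENNReal.ofReal (C ^ 2) *
          (∫⁻ ξ : ℝ, ENNReal.ofReal
            (Real.exp (2 * σ * |ξ|) * (1 + ξ ^ 2) ^ s * ‖g ξ‖ ^ 2)) *
          (∫⁻ ξ : ℝ, ENNReal.ofReal
            (Real.exp (2 * σ * |ξ|) * (1 + ξ ^ 2) ^ s * ‖h ξ‖ ^ 2)) := by
        rw [hIg, hIh]
        congr 1
        · congr 1
          exact (lintegral_congr (hconv g)).symm ▸ rfl
        · exact (lintegral_congr (hconv h)).symm
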